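/- Let f have L-Lipschitz gradient on a convex compact set C of diameter Δ, let σ ∈ [0,1/3), ρ > 0, τ > 0, and suppose along iterates (x_n) with directions (d_n) the conditions of the inexact vanilla Frank–Wolfe analysis hold (inexactness bound, stepsize lower bound η_n ≥ min{1, g̃_n/(L‖d_n‖²)}, and sufficient decrease f(x_n) − f(x_{n+1}) ≥ ρ·min{1, g̃_n/(L‖d_n‖²)}·g̃_n). If N + 1 ≥ ⌈max{ Δ²L(f(x_0)−f*)(1+σ)²/(τ²ρ(1−σ)²), 2(f(x_0)−f*)(1+σ)/(τ(1−3σ)) }⌉, then there exists n ∈ {0,…,N} with g̃_n ≤ τ, and moreover min_{0≤i≤N} g_i^{FW} ≤ τ/(1+σ). -/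

import Mathlib

open RealInnerProductSpace

/-- Descent lemma: an `L`-Lipschitz-gradient function satisfies the quadratic upper bound. -/
lemma descent_aux {dim : ℕ} (f : EuclideanSpace ℝ (Fin dim) → ℝ)
    (gradf : EuclideanSpace ℝ (Fin dim) → EuclideanSpace ℝ (Fin dim))
    (hf : ∀ y, HasGradientAt f (gradf y) y)
    (L : ℝ) (hL : 0 ≤ L)
    (hLip : ∀ y z, ‖gradf y - gradf z‖ ≤ L * ‖y - z‖)
    (a v : EuclideanSpace ℝ (Fin dim)) :
    f (a + v) ≤ f a + ⟪gradf a, v⟫ + L / 2 * ‖v‖ ^ 2 := by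
  set ψ : ℝ → ℝ := fun t => f (a + t • v) - t * ⟪gradf a, v⟫ - L * t ^ 2 / 2 * ‖v‖ ^ 2 with hψ
  have hder : ∀ t : ℝ, HasDerivAt ψ
      (⟪gradf (a + t • v), v⟫ - ⟪gradf a, v⟫ - L * t * ‖v‖ ^ 2) t := by
    intro t
    have h1 : HasDerivAt (fun t : ℝ => a + t • v) v t := by
      simpa using ((hasDerivAt_id t).smul_const v).const_add a
    have h2 : HasFDerivAt f ((InnerProductSpace.toDual ℝ _) (gradf (a + t • v))) (a + t • v) :=
      (hf (a + t • v)).hasFDerivAt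
    have h3 : HasDerivAt (fun t : ℝ => f (a + t • v)) ⟪gradf (a + t • v), v⟫ t := by
      have h3' := h2.comp_hasDerivAt t h1
      rw [InnerProductSpace.toDual_apply_apply] at h3'
      exact h3'
    have h4 : HasDerivAt (fun t : ℝ => t * ⟪gradf a, v⟫) ⟪gradf a, v⟫ t := by
      simpa using (hasDerivAt_id t).mul_const (⟪gradf a, v⟫ : ℝ)
    have h5 : HasDerivAt (fun t : ℝ => L * t ^ 2 / 2 * ‖v‖ ^ 2) (L * t * ‖v‖ ^ 2) t := by
      have : HasDerivAt (fun t : ℝ => t ^ 2) (2 * t) t := by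
        simpa using hasDerivAt_pow 2 t
      have := ((this.const_mul L).div_const 2).mul_const (‖v‖ ^ 2)
      rw [show L * t * ‖v‖ ^ 2 = L * (2 * t) / 2 * ‖v‖ ^ 2 by ring]
      exact this
    exact (h3.sub h4).sub h5
  have hanti : AntitoneOn ψ (Set.Icc (0 : ℝ) 1) := by
    apply antitoneOn_of_deriv_nonpos (convex_Icc 0 1)
    · exact fun t _ => (hder t).continuousAt.continuousWithinAt
    · intro t ht
      exact ((hder t).differentiableAt).differentiableWithinAt
    · intro t ht
      rw [interior_Icc] at ht
      rw [(hder t).deriv]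
      have h1 : ⟪gradf (a + t • v) - gradf a, v⟫ ≤ ‖gradf (a + t • v) - gradf a‖ * ‖v‖ :=
        real_inner_le_norm _ _
      have h2 : ‖gradf (a + t • v) - gradf a‖ ≤ L * (t * ‖v‖) := by
        have := hLip (a + t • v) a
        simpa [norm_smul, abs_of_nonneg ht.1.le, mul_assoc] using this
      have h3 : ⟪gradf (a + t • v), v⟫ - ⟪gradf a, v⟫ ≤ L * t * ‖v‖ ^ 2 := by
        have := le_trans h1 (by
          have : ‖gradf (a + t • v) - gradf a‖ * ‖v‖ ≤ L * (t * ‖v‖) * ‖v‖ :=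
            mul_le_mul_of_nonneg_right h2 (norm_nonneg v)
          exact this)
        calc ⟪gradf (a + t • v), v⟫ - ⟪gradf a, v⟫ = ⟪gradf (a + t • v) - gradf a, v⟫ := by
              rw [inner_sub_left]
          _ ≤ L * (t * ‖v‖) * ‖v‖ := this
          _ = L * t * ‖v‖ ^ 2 := by ring
      linarith
  have h01 : (0 : ℝ) ∈ Set.Icc (0 : ℝ) 1 := by norm_num
  have h11 : (1 : ℝ) ∈ Set.Icc (0 : ℝ) 1 := by norm_num
  have := hanti h01 h11 (by norm_num)
  simp only [hψ] at this
  simp only [one_smul, zero_smul, add_zero, one_pow, zero_pow, one_mul, zero_mul,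
    mul_zero, sub_zero] at this
  nlinarith [this]

set_option maxHeartbeats 1600000 in
theorem stmt_18 {dim : ℕ} (C : Set (EuclideanSpace ℝ (Fin dim)))
    (hCconv : Convex ℝ C) (hCcomp : IsCompact C)
    (Δ : ℝ) (hΔ : 0 < Δ) (hdiam : ∀ y ∈ C, ∀ z ∈ C, ‖y - z‖ ≤ Δ)
    (f : EuclideanSpace ℝ (Fin dim) → ℝ)
    (gradf gtil : EuclideanSpace ℝ (Fin dim) → EuclideanSpace ℝ (Fin dim))
    (hf : ∀ y, HasGradientAt f (gradf y) y)
    (L : ℝ) (hL : 0 < L)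
    (hLip : ∀ y z, ‖gradf y - gradf z‖ ≤ L * ‖y - z‖)
    (σ τ ρ : ℝ) (hσ0 : 0 ≤ σ) (hσ1 : σ < 1 / 3) (hτ : 0 < τ) (hρ : 0 < ρ)
    (hinexact : ∀ x ∈ C, ∀ xb ∈ C,
      |⟪gradf xb - gtil xb, x - xb⟫| ≤ σ / (1 + σ) * τ)
    (fstar : ℝ) (hfstar : ∀ y ∈ C, fstar ≤ f y)
    (x xhat d : ℕ → EuclideanSpace ℝ (Fin dim)) (η : ℕ → ℝ)
    (hxC : ∀ n, x n ∈ C) (hxhatC : ∀ n, xhat n ∈ C)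
    (hlmo : ∀ n, ∀ z ∈ C, ⟪gtil (x n), xhat n - x n⟫ ≤ ⟪gtil (x n), z - x n⟫)
    (hd : ∀ n, d n = xhat n - x n)
    (hupdate : ∀ n, x (n + 1) = x n + η n • d n)
    (hstep : ∀ n, η n ≥ min 1 ((-⟪gtil (x n), d n⟫) / (L * ‖d n‖ ^ 2)))
    (hdec : ∀ n, f (x n) - f (x (n + 1)) ≥
      ρ * min 1 ((-⟪gtil (x n), d n⟫) / (L * ‖d n‖ ^ 2)) * (-⟪gtil (x n), d n⟫))
    (y : ℕ → EuclideanSpace ℝ (Fin dim)) (hyC : ∀ i, y i ∈ C)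
    (hyFW : ∀ i, ∀ z ∈ C, ⟪gradf (x i), y i - x i⟫ ≤ ⟪gradf (x i), z - x i⟫)
    (N : ℕ)
    (hN : (N : ℝ) + 1 ≥
      (⌈max (Δ ^ 2 * L * (f (x 0) - fstar) * (1 + σ) ^ 2 / (τ ^ 2 * ρ * (1 - σ) ^ 2))
          (2 * (f (x 0) - fstar) * (1 + σ) / (τ * (1 - 3 * σ)))⌉ : ℤ)) :
    (∃ n ≤ N, -⟪gtil (x n), d n⟫ ≤ τ) ∧
    (∃ i ≤ N, -⟪gradf (x i), y i - x i⟫ ≤ τ / (1 + σ)) := by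
  have hσp : (0 : ℝ) < 1 + σ := by linarith
  have h1σ : (0 : ℝ) < 1 - σ := by linarith
  have h13σ : (0 : ℝ) < 1 - 3 * σ := by linarith
  set ε : ℝ := σ / (1 + σ) * τ with hε
  have hε0 : 0 ≤ ε := by positivity
  set τ' : ℝ := τ * (1 - σ) / (1 + σ) with hτ'
  have hτ'0 : 0 < τ' := by positivity
  set c : ℝ := τ * (1 - 3 * σ) / (2 * (1 + σ)) with hc
  have hc0 : 0 < c := by positivity
  set q : ℝ := ρ * τ' ^ 2 / (L * Δ ^ 2) with hq
  have hq0 : 0 < q := by positivity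
  set F : ℝ := f (x 0) - fstar with hF
  -- Key claim: some inexact gap is ≤ τ'
  have key : ∃ n ≤ N, -⟪gtil (x n), d n⟫ ≤ τ' := by
    by_contra hcon
    push_neg at hcon
    -- per-step decrease
    have step : ∀ n ≤ N, min q c < f (x n) - f (x (n + 1)) := by
      intro n hn
      have hg : τ' < -⟪gtil (x n), d n⟫ := hcon n hn
      set g : ℝ := -⟪gtil (x n), d n⟫ with hgdef
      have hg0 : 0 < g := lt_trans hτ'0 hg
      have hdn : d n ≠ 0 := by
        intro h
        rw [hgdef, h] at hg0
        simp at hg0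
      have hdnorm : 0 < ‖d n‖ := norm_pos_iff.mpr hdn
      have hdΔ : ‖d n‖ ≤ Δ := by
        rw [hd]; exact hdiam _ (hxhatC n) _ (hxC n)
      have hden : 0 < L * ‖d n‖ ^ 2 := by positivity
      by_cases hfull : L * ‖d n‖ ^ 2 ≤ g
      · -- full step: η n = 1 and descent lemma
        have hrat : (1 : ℝ) ≤ g / (L * ‖d n‖ ^ 2) := (one_le_div hden).mpr hfull
        have hη1 : (1 : ℝ) ≤ η n := by
          have h := hstep n
          rw [← hgdef, min_eq_left hrat] at h
          exact h
        have hηle : η n ≤ 1 := by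
          have h := hlmo n (x (n + 1)) (hxC (n + 1))
          rw [hupdate n, ← hd n] at h
          have h2 : (x n + η n • d n - x n) = η n • d n := by abel
          rw [h2, real_inner_smul_right] at h
          -- h : ⟪gtil (x n), d n⟫ ≤ η n * ⟪gtil (x n), d n⟫
          have hip : ⟪gtil (x n), d n⟫ = -g := by rw [hgdef]; ring
          rw [hip] at h
          -- h : -g ≤ η n * -g
          have h' : η n * g ≤ 1 * g := by linarith
          exact le_of_mul_le_mul_right h' hg0
        have hηeq : η n = 1 := le_antisymm hηle hη1
        have hx1 : x (n + 1) = x n + d n := by rw [hupdate n, hηeq, one_smul]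
        have hdesc : f (x n + d n) ≤ f (x n) + ⟪gradf (x n), d n⟫ + L / 2 * ‖d n‖ ^ 2 :=
          descent_aux f gradf hf L hL.le hLip (x n) (d n)
        have hinex := hinexact (xhat n) (hxhatC n) (x n) (hxC n)
        have hinex2 : ⟪gradf (x n) - gtil (x n), xhat n - x n⟫ ≤ ε := (abs_le.mp hinex).2
        have hsplit : ⟪gradf (x n), d n⟫ = ⟪gradf (x n) - gtil (x n), d n⟫ + ⟪gtil (x n), d n⟫ := by
          rw [inner_sub_left]; ring
        have hip : ⟪gtil (x n), d n⟫ = -g := by rw [hgdef]; ring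
        have hgrad_d : ⟪gradf (x n), d n⟫ ≤ ε - g := by
          rw [hsplit, hip, hd n]
          linarith
        have hquad : L / 2 * ‖d n‖ ^ 2 ≤ g / 2 := by linarith
        have hdrop : g / 2 - ε ≤ f (x n) - f (x (n + 1)) := by
          rw [hx1]
          linarith
        have hcg : c < g / 2 - ε := by
          rw [hc, hε, hτ'] at *
          have : τ * (1 - 3 * σ) / (2 * (1 + σ)) = (τ * (1 - σ) / (1 + σ)) / 2 - σ / (1 + σ) * τ := by
            field_simp
            ring
          rw [this]
          linarith
        calc min q c ≤ c := min_le_right _ _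
          _ < g / 2 - ε := hcg
          _ ≤ f (x n) - f (x (n + 1)) := hdrop
      · -- short step: sufficient decrease
        push_neg at hfull
        have hrat : g / (L * ‖d n‖ ^ 2) ≤ 1 := by
          rw [div_le_one hden]; exact hfull.le
        have h := hdec n
        rw [← hgdef, min_eq_right hrat] at h
        -- h : f (x n) - f (x (n+1)) ≥ ρ * (g / (L * ‖d n‖^2)) * g
        have hqlt : q < ρ * (g / (L * ‖d n‖ ^ 2)) * g := by
          rw [hq]
          have h1 : ρ * (g / (L * ‖d n‖ ^ 2)) * g = ρ * g ^ 2 / (L * ‖d n‖ ^ 2) := by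
            field_simp
          rw [h1]
          have h2 : ρ * τ' ^ 2 < ρ * g ^ 2 :=
            mul_lt_mul_of_pos_left (pow_lt_pow_left₀ hg hτ'0.le two_ne_zero) hρ
          have h3 : L * ‖d n‖ ^ 2 ≤ L * Δ ^ 2 :=
            mul_le_mul_of_nonneg_left (pow_le_pow_left₀ (norm_nonneg _) hdΔ 2) hL.le
          calc ρ * τ' ^ 2 / (L * Δ ^ 2) < ρ * g ^ 2 / (L * Δ ^ 2) :=
                (div_lt_div_iff_of_pos_right (by positivity)).mpr h2
            _ ≤ ρ * g ^ 2 / (L * ‖d n‖ ^ 2) :=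
                div_le_div_of_nonneg_left (by positivity) hden h3
        calc min q c ≤ q := min_le_left _ _
          _ < ρ * (g / (L * ‖d n‖ ^ 2)) * g := hqlt
          _ ≤ f (x n) - f (x (n + 1)) := h
    -- sum up
    have hsum : ∑ n ∈ Finset.range (N + 1), (f (x n) - f (x (n + 1))) = f (x 0) - f (x (N + 1)) :=
      Finset.sum_range_sub' (fun n => f (x n)) (N + 1)
    have hsumlt : ((N : ℝ) + 1) * min q c < f (x 0) - f (x (N + 1)) := by
      have h := Finset.sum_lt_sum_of_nonempty
        (Finset.nonempty_range_iff.mpr (Nat.succ_ne_zero N))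
        (f := fun _ => min q c) (g := fun n => f (x n) - f (x (n + 1)))
        (fun i hi => step i (Nat.lt_succ_iff.mp (Finset.mem_range.mp hi)))
      rw [Finset.sum_const, Finset.card_range, nsmul_eq_mul, hsum] at h
      push_cast at h ⊢
      linarith
    have hFbound : f (x 0) - f (x (N + 1)) ≤ F := by
      have := hfstar _ (hxC (N + 1))
      rw [hF]; linarith
    -- N+1 ≥ A and N+1 ≥ B
    set A : ℝ := Δ ^ 2 * L * F * (1 + σ) ^ 2 / (τ ^ 2 * ρ * (1 - σ) ^ 2) with hA
    set B : ℝ := 2 * F * (1 + σ) / (τ * (1 - 3 * σ)) with hB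
    have hNmax : max A B ≤ (N : ℝ) + 1 := le_trans (Int.le_ceil _) hN
    have hNA : A ≤ (N : ℝ) + 1 := le_trans (le_max_left _ _) hNmax
    have hNB : B ≤ (N : ℝ) + 1 := le_trans (le_max_right _ _) hNmax
    have hAq : A * q = F := by
      rw [hA, hq, hτ']
      field_simp
    have hBc : B * c = F := by
      rw [hB, hc]
      rw [div_mul_div_comm, div_eq_iff (by positivity)]
      ring
    have hFq : F ≤ ((N : ℝ) + 1) * q := by
      rw [← hAq]; exact mul_le_mul_of_nonneg_right hNA hq0.le
    have hFc : F ≤ ((N : ℝ) + 1) * c := by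
      rw [← hBc]; exact mul_le_mul_of_nonneg_right hNB hc0.le
    have hFmin : F ≤ ((N : ℝ) + 1) * min q c := by
      rcases min_cases q c with ⟨hm, _⟩ | ⟨hm, _⟩ <;> rw [hm] <;> assumption
    linarith
  obtain ⟨n₀, hn₀, hg₀⟩ := key
  constructor
  · refine ⟨n₀, hn₀, le_trans hg₀ ?_⟩
    rw [hτ', div_le_iff₀ hσp]
    nlinarith
  · refine ⟨n₀, hn₀, ?_⟩
    have hinex := hinexact (y n₀) (hyC n₀) (x n₀) (hxC n₀)
    have hinex2 : -ε ≤ ⟪gradf (x n₀) - gtil (x n₀), y n₀ - x n₀⟫ := (abs_le.mp hinex).1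
    have hlmo2 : ⟪gtil (x n₀), xhat n₀ - x n₀⟫ ≤ ⟪gtil (x n₀), y n₀ - x n₀⟫ :=
      hlmo n₀ (y n₀) (hyC n₀)
    have hsplit : ⟪gradf (x n₀), y n₀ - x n₀⟫ =
        ⟪gradf (x n₀) - gtil (x n₀), y n₀ - x n₀⟫ + ⟪gtil (x n₀), y n₀ - x n₀⟫ := by
      rw [inner_sub_left]; ring
    have hgap : -⟪gtil (x n₀), y n₀ - x n₀⟫ ≤ τ' := by
      have : -⟪gtil (x n₀), xhat n₀ - x n₀⟫ ≤ τ' := by rw [← hd n₀]; exact hg₀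
      linarith
    have hfin : -⟪gradf (x n₀), y n₀ - x n₀⟫ ≤ ε + τ' := by
      rw [hsplit]; linarith
    have heq : ε + τ' = τ / (1 + σ) := by
      rw [hε, hτ']
      field_simp
      ring
    linarith
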